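/- Let F be a field with char(F) ≠ 2, G a group with non-trivial orientation σ and involution *, and suppose FG is normal with respect to the oriented involution ⊛. If g, h ∈ G do not commute and σ(h) = 1, then g²h = hg²; if g, h do not commute and σ(h) = −1, then g²h = (g²h)*. -/

import Mathlib

/-- The oriented involution on the group algebra: `(Σ α_g g)⊛ = Σ α_g σ(g) g*`. -/
noncomputable def oinvMap {F G : Type*} [Field F] [Group G] (st : G → G) (σ : G → F) :
    MonoidAlgebra F G → MonoidAlgebra F G :=
  fun α => MonoidAlgebra.ofCoeff (Finsupp.sum α.coeff fun g c => Finsupp.single (st g) (σ g * c))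

section aux

variable {F G : Type*} [Field F] [Group G]

lemma oinv_single (st : G → G) (σ : G → F) (g : G) (c : F) :
    oinvMap st σ (MonoidAlgebra.single g c) = MonoidAlgebra.single (st g) (σ g * c) := by
  unfold oinvMap
  rw [MonoidAlgebra.coeff_single, Finsupp.sum_single_index]
  · rfl
  · simp

lemma oinv_add (st : G → G) (σ : G → F) (α β : MonoidAlgebra F G) :
    oinvMap st σ (α + β) = oinvMap st σ α + oinvMap st σ β := by
  unfold oinvMap
  rw [MonoidAlgebra.coeff_add, ← MonoidAlgebra.ofCoeff_add]
  congr 1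
  exact Finsupp.sum_add_index' (fun a => by simp) (fun a b₁ b₂ => by
    rw [mul_add, Finsupp.single_add])

lemma sig_ne_zero {σ : G → F} (hval : ∀ g : G, σ g = 1 ∨ σ g = -1) (g : G) : σ g ≠ 0 := by
  rcases hval g with h | h <;> rw [h] <;> simp

lemma keyD {st : G → G} {σ : G → F} (hval : ∀ g : G, σ g = 1 ∨ σ g = -1)
    (hnormal : ∀ α : MonoidAlgebra F G, α * oinvMap st σ α = oinvMap st σ α * α)
    (g : G) : g * st g = st g * g := by
  have H := hnormal (MonoidAlgebra.single g 1)
  rw [oinv_single] at H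
  have H2 : (MonoidAlgebra.single (g * st g) (σ g) : MonoidAlgebra F G)
      = MonoidAlgebra.single (st g * g) (σ g) := by
    simpa using H
  rcases MonoidAlgebra.single_inj.mp H2 with ⟨h, _⟩ | ⟨h, _⟩
  · exact h
  · exact absurd h (sig_ne_zero hval g)

lemma keyE {st : G → G} {σ : G → F} (hval : ∀ g : G, σ g = 1 ∨ σ g = -1)
    (hnormal : ∀ α : MonoidAlgebra F G, α * oinvMap st σ α = oinvMap st σ α * α)
    (x y : G) :
    (MonoidAlgebra.single (y * st x) (σ x) + MonoidAlgebra.single (x * st y) (σ y) : MonoidAlgebra F G)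
      = MonoidAlgebra.single (st y * x) (σ y) + MonoidAlgebra.single (st x * y) (σ x) := by
  have H := hnormal (MonoidAlgebra.single x 1 + MonoidAlgebra.single y 1)
  rw [oinv_add, oinv_single, oinv_single, mul_one, mul_one] at H
  simp only [mul_add, add_mul] at H
  simp only [MonoidAlgebra.single_mul_single, one_mul, mul_one] at H
  rw [keyD hval hnormal x, keyD hval hnormal y] at H
  have key : (MonoidAlgebra.single (y * st x) (σ x) + MonoidAlgebra.single (x * st y) (σ y)
        : MonoidAlgebra F G)
      - (MonoidAlgebra.single (st y * x) (σ y) + MonoidAlgebra.single (st x * y) (σ x))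
      = (MonoidAlgebra.single (st x * x) (σ x) + MonoidAlgebra.single (y * st x) (σ x)
          + (MonoidAlgebra.single (x * st y) (σ y) + MonoidAlgebra.single (st y * y) (σ y)))
        - (MonoidAlgebra.single (st x * x) (σ x) + MonoidAlgebra.single (st y * x) (σ y)
          + (MonoidAlgebra.single (st x * y) (σ x) + MonoidAlgebra.single (st y * y) (σ y))) := by
    abel
  rw [← sub_eq_zero, key, H, sub_self]

lemma ext_pos {c : F} (hc : c ≠ 0) (h2 : (2 : F) ≠ 0) {W1 W2 W3 W4 : G} (hne : W1 ≠ W3)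
    (heq : (MonoidAlgebra.single W1 c + MonoidAlgebra.single W2 c : MonoidAlgebra F G)
      = MonoidAlgebra.single W3 c + MonoidAlgebra.single W4 c) : W1 = W4 ∧ W2 = W3 := by
  classical
  have twoc : c + c ≠ 0 := by rw [← two_mul]; exact mul_ne_zero h2 hc
  have key : ∀ x, ((if W1 = x then c else 0) + (if W2 = x then c else 0))
      = ((if W3 = x then c else 0) + (if W4 = x then c else 0)) := by
    intro x
    have hx := congrArg (fun z : MonoidAlgebra F G => z.coeff x) heq
    simp only [MonoidAlgebra.coeff_add, MonoidAlgebra.coeff_single, Finsupp.add_apply,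
      Finsupp.single_apply] at hx
    exact hx
  have e1 := key W1
  rw [if_pos rfl, if_neg (Ne.symm hne), zero_add] at e1
  have h41 : W4 = W1 := by
    by_contra h41
    rw [if_neg h41] at e1
    split_ifs at e1 with h21
    · exact twoc e1
    · rw [add_zero] at e1; exact hc e1
  have h21 : W2 ≠ W1 := by
    intro h21
    rw [if_pos h21, if_pos h41] at e1
    exact hc (by linear_combination e1)
  have e2 := key W2
  rw [if_pos rfl, if_neg (fun h : W1 = W2 => h21 h.symm),
    if_neg (fun h : W4 = W2 => h21 (h41.symm.trans h).symm), zero_add, add_zero] at e2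
  have h32 : W3 = W2 := by
    by_contra hx
    rw [if_neg hx] at e2
    exact hc e2
  exact ⟨h41.symm, h32.symm⟩

lemma ext_neg {c : F} (hc : c ≠ 0) (h2 : (2 : F) ≠ 0) {W1 W2 W3 W4 : G} (hne : W1 ≠ W3)
    (heq : (MonoidAlgebra.single W1 c + MonoidAlgebra.single W2 (-c) : MonoidAlgebra F G)
      = MonoidAlgebra.single W3 c + MonoidAlgebra.single W4 (-c)) : W1 = W2 ∧ W3 = W4 := by
  classical
  have twoc : c + c ≠ 0 := by rw [← two_mul]; exact mul_ne_zero h2 hc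
  have hnc : -c ≠ 0 := neg_ne_zero.mpr hc
  have key : ∀ x, ((if W1 = x then c else 0) + (if W2 = x then -c else 0))
      = ((if W3 = x then c else 0) + (if W4 = x then -c else 0)) := by
    intro x
    have hx := congrArg (fun z : MonoidAlgebra F G => z.coeff x) heq
    simp only [MonoidAlgebra.coeff_add, MonoidAlgebra.coeff_single, Finsupp.add_apply,
      Finsupp.single_apply] at hx
    exact hx
  have e1 := key W1
  rw [if_pos rfl, if_neg (Ne.symm hne), zero_add] at e1
  have h21 : W2 = W1 := by
    by_contra h21
    rw [if_neg h21, add_zero] at e1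
    split_ifs at e1 with h41
    · exact twoc (by linear_combination e1)
    · exact hc e1
  have h41 : W4 ≠ W1 := by
    intro h41
    rw [if_pos h21, if_pos h41] at e1
    exact hc (by linear_combination e1)
  have e2 := key W4
  rw [if_pos rfl, if_neg (fun h : W1 = W4 => h41 h.symm),
    if_neg (fun h : W2 = W4 => h41 (h.symm.trans h21)), add_zero] at e2
  have h34 : W3 = W4 := by
    by_contra hx
    rw [if_neg hx, zero_add] at e2
    exact hc (by linear_combination e2)
  exact ⟨h21.symm, h34⟩

lemma dich (h2 : (2 : F) ≠ 0) {st : G → G} {σ : G → F}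
    (hanti : ∀ g h : G, st (g * h) = st h * st g)
    (hinvol : ∀ g : G, st (st g) = g)
    (hhom : ∀ g h : G, σ (g * h) = σ g * σ h)
    (hval : ∀ g : G, σ g = 1 ∨ σ g = -1)
    (hnormal : ∀ α : MonoidAlgebra F G, α * oinvMap st σ α = oinvMap st σ α * α)
    (g h : G) (hne : g * h ≠ h * g) :
    (σ g = 1 → g * h = h * st g) ∧ (σ g = -1 → st g = g ∧ g * g * h = h * (g * g)) := by
  classical
  have hc : σ (st h) ≠ 0 := sig_ne_zero hval (st h)
  have E1 := keyE hval hnormal g (st h)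
  rw [hinvol h] at E1
  have L := congrArg (fun z : MonoidAlgebra F G => (MonoidAlgebra.single g (1:F)) * z) E1
  simp only [mul_add] at L
  simp only [MonoidAlgebra.single_mul_single, one_mul] at L
  simp only [← mul_assoc] at L
  rw [keyD hval hnormal g] at L
  have E2 := keyE hval hnormal g (g * st h)
  rw [hanti g (st h), hinvol h, hhom g (st h)] at E2
  simp only [← mul_assoc] at E2
  have N : (MonoidAlgebra.single (g * g * h) (σ (st h))
        + MonoidAlgebra.single (h * st g * g) (σ g * σ (st h)) : MonoidAlgebra F G)
      = MonoidAlgebra.single (g * h * g) (σ (st h))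
        + MonoidAlgebra.single (g * h * st g) (σ g * σ (st h)) := by
    have key : (MonoidAlgebra.single (g * g * h) (σ (st h))
          + MonoidAlgebra.single (h * st g * g) (σ g * σ (st h)) : MonoidAlgebra F G)
        - (MonoidAlgebra.single (g * h * g) (σ (st h))
          + MonoidAlgebra.single (g * h * st g) (σ g * σ (st h)))
        = ((MonoidAlgebra.single (g * st h * st g) (σ g)
              + MonoidAlgebra.single (g * g * h) (σ (st h)))
            - (MonoidAlgebra.single (g * h * g) (σ (st h))
              + MonoidAlgebra.single (st g * g * st h) (σ g)))
          - ((MonoidAlgebra.single (g * st h * st g) (σ g)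
              + MonoidAlgebra.single (g * h * st g) (σ g * σ (st h)))
            - (MonoidAlgebra.single (h * st g * g) (σ g * σ (st h))
              + MonoidAlgebra.single (st g * g * st h) (σ g))) := by
      abel
    rw [← sub_eq_zero, key, sub_eq_zero_of_eq L, sub_eq_zero_of_eq E2, sub_zero]
  have hW13 : g * g * h ≠ g * h * g := by
    intro e
    rw [mul_assoc, mul_assoc] at e
    exact hne (mul_left_cancel e)
  constructor
  · intro hσ
    rw [hσ, one_mul] at N
    obtain ⟨e14, _⟩ := ext_pos hc h2 hW13 N
    rw [mul_assoc, mul_assoc] at e14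
    exact mul_left_cancel e14
  · intro hσ
    rw [hσ, neg_one_mul] at N
    obtain ⟨e12, e34⟩ := ext_neg hc h2 hW13 N
    have hst : st g = g := by
      rw [mul_assoc, mul_assoc] at e34
      exact (mul_left_cancel (mul_left_cancel e34)).symm
    refine ⟨hst, ?_⟩
    rw [hst] at e12
    rw [e12, mul_assoc]

end aux

theorem stmt_11 {F G : Type*} [Field F] [Group G] (h2 : (2 : F) ≠ 0)
    (st : G → G) (hanti : ∀ g h : G, st (g * h) = st h * st g)
    (hinvol : ∀ g : G, st (st g) = g)
    (σ : G → F) (hhom : ∀ g h : G, σ (g * h) = σ g * σ h)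
    (hval : ∀ g : G, σ g = 1 ∨ σ g = -1)
    (hnt : ∃ g : G, σ g = -1)
    (hker : ∀ g : G, σ (g * st g) = 1)
    (hnormal : ∀ α : MonoidAlgebra F G, α * oinvMap st σ α = oinvMap st σ α * α) :
    ∀ g h : G, g * h ≠ h * g →
      (σ h = 1 → g ^ 2 * h = h * g ^ 2) ∧
      (σ h = -1 → g ^ 2 * h = st (g ^ 2 * h)) := by
  intro g h hne
  constructor
  · intro hσ
    have d1 := (dich h2 hanti hinvol hhom hval hnormal h g (fun e => hne e.symm)).1 hσ
    have hne' : h * g⁻¹ ≠ g⁻¹ * h := by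
      intro e
      apply hne
      have e2 := congrArg (fun x => g * x * g) e
      simpa [mul_assoc] using e2
    have d2 := (dich h2 hanti hinvol hhom hval hnormal h g⁻¹ hne').1 hσ
    have hsth : st h = g * (h * g⁻¹) := by rw [d2]; group
    have final : h * (g * g) = (g * g) * h := by
      have e3 : h * g * g = g * (g * (h * g⁻¹)) * g := by rw [d1, hsth]
      calc h * (g * g) = h * g * g := by rw [mul_assoc]
        _ = g * (g * (h * g⁻¹)) * g := e3
        _ = (g * g) * h := by group
    rw [pow_two]
    exact final.symm
  · intro hσ
    obtain ⟨hsth, -⟩ := (dich h2 hanti hinvol hhom hval hnormal h g (fun e => hne e.symm)).2 hσ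
    have hst2 : st (g ^ 2 * h) = st h * (st g * st g) := by
      rw [pow_two, hanti, hanti]
    rw [hst2, hsth]
    rcases hval g with hg | hg
    · have e := (dich h2 hanti hinvol hhom hval hnormal g h hne).1 hg
      have hstg : st g = h⁻¹ * (g * h) := by rw [e]; group
      rw [hstg, pow_two]
      group
    · obtain ⟨hstg, e2⟩ := (dich h2 hanti hinvol hhom hval hnormal g h hne).2 hg
      rw [hstg, pow_two, e2]
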